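/- Let π, ρ ∈ L_CPL each be a conjunction of propositional variables or a disjunction of propositional variables such that π ⊭_CPL ρ, ρ ⊭_CPL π, and π ∧ ρ is CPL-satisfiable, let c, d ∈ [0,1]∩ℚ and ◇, ◇' ∈ {≤,<,>,≥}, and suppose both Pr(π)◇c̄ and Pr(ρ)◇'d̄ are FP-satisfiable and not FP-valid. Then Pr(π)◇c̄ ⊭_FP Pr(ρ)◇'d̄. -/

import Mathlib

open scoped Classical

/-- Classical propositional formulas (the language `L_CPL`), built from
propositional variables (indexed by `ℕ`) using ¬, ∧, ∨. -/
inductive CPL where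
  | var : ℕ → CPL
  | neg : CPL → CPL
  | and : CPL → CPL → CPL
  | or : CPL → CPL → CPL
deriving DecidableEq

namespace CPL

/-- The set of propositional variables occurring in a formula. -/
def vars : CPL → Finset ℕ
  | var p => {p}
  | neg φ => vars φ
  | and φ χ => vars φ ∪ vars χ
  | or φ χ => vars φ ∪ vars χ

/-- Classical evaluation of a formula under a Boolean valuation. -/
def eval (v : ℕ → Bool) : CPL → Bool
  | var p => v p
  | neg φ => !eval v φ
  | and φ χ => eval v φ && eval v χ
  | or φ χ => eval v φ || eval v χ

/-- Evaluation of a formula at a state given as a set of variables: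
the variables in `X` are true, all others false. -/
def evalSet (X : Finset ℕ) (φ : CPL) : Bool := eval (fun p => decide (p ∈ X)) φ

/-- CPL-satisfiability. -/
def Satisfiable (φ : CPL) : Prop := ∃ v, eval v φ = true

/-- CPL-validity. -/
def Valid (φ : CPL) : Prop := ∀ v, eval v φ = true

/-- Classical entailment `φ ⊨_CPL χ`. -/
def Entails (φ χ : CPL) : Prop := ∀ v, eval v φ = true → eval v χ = true

/-- A literal: a variable or a negated variable. -/
def IsLiteral (φ : CPL) : Prop := (∃ p, φ = var p) ∨ ∃ p, φ = neg (var p)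

/-- An `L_CPL`-term: a conjunction of literals. -/
inductive IsTerm : CPL → Prop
  | lit {φ} : IsLiteral φ → IsTerm φ
  | conj {φ χ} : IsTerm φ → IsTerm χ → IsTerm (and φ χ)

/-- A conjunction of propositional variables. -/
inductive IsConjVars : CPL → Prop
  | var (p : ℕ) : IsConjVars (var p)
  | conj {φ χ} : IsConjVars φ → IsConjVars χ → IsConjVars (and φ χ)

/-- A disjunction of propositional variables. -/
inductive IsDisjVars : CPL → Prop
  | var (p : ℕ) : IsDisjVars (var p)
  | disj {φ χ} : IsDisjVars φ → IsDisjVars χ → IsDisjVars (or φ χ)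

/-- Variables occurring as positive literals (in a term). -/
def posVars : CPL → Finset ℕ
  | var p => {p}
  | neg _ => ∅
  | and φ χ => posVars φ ∪ posVars χ
  | or _ _ => ∅

/-- Variables occurring as negated literals (in a term). -/
def negVars : CPL → Finset ℕ
  | var _ => ∅
  | neg (var p) => {p}
  | neg _ => ∅
  | and φ χ => negVars φ ∪ negVars χ
  | or _ _ => ∅

/-- The literals occurring in a term. -/
def lits (φ : CPL) : Finset CPL :=
  (posVars φ).image var ∪ (negVars φ).image (fun p => neg (var p))

end CPL

/-- A state (possible world) over a finite set `V` of variables: a subset of `V`. -/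
abbrev World (V : Finset ℕ) := {X : Finset ℕ // X ⊆ V}

/-- A probabilistic model for `V`: a finitely additive probability measure
`μ : 2^(2^V) → [0,1]`. -/
structure ProbModel (V : Finset ℕ) where
  μ : Set (World V) → ℝ
  nonneg : ∀ A, 0 ≤ μ A
  le_one : ∀ A, μ A ≤ 1
  m_univ : μ Set.univ = 1
  m_empty : μ ∅ = 0
  m_add : ∀ A B : Set (World V), Disjoint A B → μ (A ∪ B) = μ A + μ B

/-- The truth set `‖φ‖_M` of a classical formula in a probabilistic model for `V`. -/
def truthSet (V : Finset ℕ) (φ : CPL) : Set (World V) :=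
  {w | CPL.evalSet w.1 φ = true}

/-- Comparison symbols ◇ ∈ {≤, <, >, ≥}. -/
inductive Ineq where
  | le | lt | gt | ge
deriving DecidableEq

/-- The relation denoted by a comparison symbol. -/
def Ineq.holds : Ineq → ℝ → ℝ → Prop
  | le, x, c => x ≤ c
  | lt, x, c => x < c
  | gt, x, c => x > c
  | ge, x, c => x ≥ c

/-- Formulas of the probabilistic language `L^Q_Pr`, built from probabilistic atoms
`Pr(φ)` and `Pr(φ)◇c̄` using ¬, △, ⊙, ⊕, →. -/
inductive FP where
  | prob : CPL → FP
  | probIneq : CPL → Ineq → ℚ → FP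
  | neg : FP → FP
  | delta : FP → FP
  | conj : FP → FP → FP
  | disj : FP → FP → FP
  | impl : FP → FP → FP
deriving DecidableEq

namespace FP

/-- Well-formedness: all rational constants lie in `[0,1] ∩ ℚ`. -/
def WF : FP → Prop
  | prob _ => True
  | probIneq _ _ c => 0 ≤ c ∧ c ≤ 1
  | neg α => WF α
  | delta α => WF α
  | conj α β => WF α ∧ WF β
  | disj α β => WF α ∧ WF β
  | impl α β => WF α ∧ WF β

/-- The variables of an `L^Q_Pr`-formula. -/
def vars : FP → Finset ℕ
  | prob φ => φ.vars
  | probIneq φ _ _ => φ.vars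
  | neg α => vars α
  | delta α => vars α
  | conj α β => vars α ∪ vars β
  | disj α β => vars α ∪ vars β
  | impl α β => vars α ∪ vars β

/-- The events `E(α)`: the classical formulas occurring in probabilistic atoms of `α`. -/
def events : FP → Finset CPL
  | prob φ => {φ}
  | probIneq φ _ _ => {φ}
  | neg α => events α
  | delta α => events α
  | conj α β => events α ∪ events β
  | disj α β => events α ∪ events β
  | impl α β => events α ∪ events β

/-- The FP-interpretation `I_M` induced by a probabilistic model `M`. -/
noncomputable def interp {V : Finset ℕ} (M : ProbModel V) : FP → ℝ
  | prob φ => M.μ (truthSet V φ)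
  | probIneq φ d c => if d.holds (M.μ (truthSet V φ)) (c : ℝ) then 1 else 0
  | neg α => 1 - interp M α
  | delta α => if interp M α = 1 then 1 else 0
  | conj α β => max 0 (interp M α + interp M β - 1)
  | disj α β => min 1 (interp M α + interp M β)
  | impl α β => min 1 (1 - interp M α + interp M β)

/-- `α` is FP-satisfiable: `I_M(α) = 1` in some probabilistic model for `Var(α)`. -/
def Satisfiable (α : FP) : Prop := ∃ M : ProbModel α.vars, interp M α = 1

/-- `α` is FP-valid: `I_M(α) = 1` in every probabilistic model for `Var(α)`. -/
def Valid (α : FP) : Prop := ∀ M : ProbModel α.vars, interp M α = 1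

/-- `α ⊨_FP β`: `I_M(β) = 1` in every probabilistic model for the variables of
`{α, β}` with `I_M(α) = 1`. -/
def Entails1 (α β : FP) : Prop :=
  ∀ M : ProbModel (α.vars ∪ β.vars), interp M α = 1 → interp M β = 1

/-- The variables of a finite set of `L^Q_Pr`-formulas. -/
def varsSet (Γ : Finset FP) : Finset ℕ := Γ.sup vars

/-- A finite set `Γ` is FP-satisfiable (`Γ ⊭_FP ⊥`): some probabilistic model for
the variables of `Γ` makes every member of `Γ` equal to `1`. -/
def SetSatisfiable (Γ : Finset FP) : Prop :=
  ∃ M : ProbModel (varsSet Γ), ∀ γ ∈ Γ, interp M γ = 1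

/-- `Γ ⊨_FP δ`: every probabilistic model for the variables of `Γ ∪ {δ}` satisfying
all of `Γ` satisfies `δ`. -/
def EntailsFin (Γ : Finset FP) (δ : FP) : Prop :=
  ∀ M : ProbModel (varsSet Γ ∪ δ.vars), (∀ γ ∈ Γ, interp M γ = 1) → interp M δ = 1

/-- `Γ ⊨^cons_FP δ`: `Γ ⊨_FP δ` and `Γ ⊭_FP ⊥`. -/
def ConsEntails (Γ : Finset FP) (δ : FP) : Prop :=
  EntailsFin Γ δ ∧ SetSatisfiable Γ

/-- The set of permitted values `V_Pr(Pr(φ)◇c̄)`. -/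
def permittedValues (φ : CPL) (d : Ineq) (c : ℚ) : Set ℝ :=
  {x | ∃ (V : Finset ℕ) (M : ProbModel V), φ.vars ⊆ V ∧
      interp M (probIneq φ d c) = 1 ∧ M.μ (truthSet V φ) = x}

end FP

/-- Formulas of the Łukasiewicz language `L^Q_Ł`, built from propositional variables
and truth-constant literals `p◇c̄` using ¬, △, ⊙, ⊕, →. -/
inductive Luk where
  | var : ℕ → Luk
  | ineq : ℕ → Ineq → ℚ → Luk
  | neg : Luk → Luk
  | delta : Luk → Luk
  | conj : Luk → Luk → Luk
  | disj : Luk → Luk → Luk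
  | impl : Luk → Luk → Luk
deriving DecidableEq

/-- An Ł-valuation: a function `Var → [0,1]`. -/
structure LukVal where
  v : ℕ → ℝ
  mem : ∀ p, v p ∈ Set.Icc (0 : ℝ) 1

/-- Extension of an Ł-valuation to all `L^Q_Ł`-formulas. -/
noncomputable def LukVal.eval (val : LukVal) : Luk → ℝ
  | .var p => val.v p
  | .ineq p d c => if d.holds (val.v p) (c : ℝ) then 1 else 0
  | .neg φ => 1 - val.eval φ
  | .delta φ => if val.eval φ = 1 then 1 else 0
  | .conj φ χ => max 0 (val.eval φ + val.eval χ - 1)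
  | .disj φ χ => min 1 (val.eval φ + val.eval χ)
  | .impl φ χ => min 1 (1 - val.eval φ + val.eval χ)

namespace Luk

/-- Well-formedness: all rational constants lie in `[0,1] ∩ ℚ`. -/
def WF : Luk → Prop
  | var _ => True
  | ineq _ _ c => 0 ≤ c ∧ c ≤ 1
  | neg φ => WF φ
  | delta φ => WF φ
  | conj φ χ => WF φ ∧ WF χ
  | disj φ χ => WF φ ∧ WF χ
  | impl φ χ => WF φ ∧ WF χ

/-- `Φ ⊨_Ł χ` for a finite set `Φ`. -/
def EntailsFin (Φ : Finset Luk) (χ : Luk) : Prop :=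
  ∀ val : LukVal, (∀ φ ∈ Φ, val.eval φ = 1) → val.eval χ = 1

/-- `φ` is Ł-valid. -/
def ValidL (φ : Luk) : Prop := ∀ val : LukVal, val.eval φ = 1

/-- A set of `L^Q_Ł`-formulas is Ł-satisfiable. -/
def SatisfiableSet (S : Set Luk) : Prop := ∃ val : LukVal, ∀ φ ∈ S, val.eval φ = 1

/-- The probabilistic counterpart `φ^Pr` of a Łukasiewicz formula. -/
def toFP : Luk → FP
  | var p => .prob (.var p)
  | ineq p d c => .probIneq (.var p) d c
  | neg φ => .neg (toFP φ)
  | delta φ => .delta (toFP φ)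
  | conj φ χ => .conj (toFP φ) (toFP χ)
  | disj φ χ => .disj (toFP φ) (toFP χ)
  | impl φ χ => .impl (toFP φ) (toFP χ)

end Luk

namespace FP

/-- The outer counterpart `α^↑` of an `L^Q_Pr`-formula, replacing each atom `Pr(φ)`
by the fresh variable `e φ` (and `Pr(φ)◇c̄` by `(e φ)◇c̄`). -/
def outer (e : CPL → ℕ) : FP → Luk
  | prob φ => .var (e φ)
  | probIneq φ d c => .ineq (e φ) d c
  | neg α => .neg (outer e α)
  | delta α => .delta (outer e α)
  | conj α β => .conj (outer e α) (outer e β)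
  | disj α β => .disj (outer e α) (outer e β)
  | impl α β => .impl (outer e α) (outer e β)

end FP

/-- The ⊙-conjunction of a (nonempty) list of `L^Q_Pr`-formulas. -/
def bigConjFP : List FP → FP
  | [] => .probIneq (.var 0) .ge 0
  | a :: t => t.foldl .conj a

/-- The ∨-disjunction of a (nonempty) list of classical formulas. -/
def bigDisjCPL : List CPL → CPL
  | [] => .var 0
  | a :: t => t.foldl .or a

/-- The PIT `⊙_i Pr(τ_i)≤c̄_i ⊙ ⊙_i Pr(τ_i)≥c̄_i` associated with the list of
pairs `(τ_i, c_i)`. -/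
def completePITFormula (L : List (CPL × ℚ)) : FP :=
  bigConjFP (L.map (fun t => FP.probIneq t.1 .le t.2) ++
             L.map (fun t => FP.probIneq t.1 .ge t.2))

/-- `τ` is an `L_CPL`-term containing, for every `p ∈ V`, exactly one of the
literals `p` and `¬p` (and no other variables). -/
def IsCompleteTermOver (V : Finset ℕ) (τ : CPL) : Prop :=
  CPL.IsTerm τ ∧ τ.vars ⊆ V ∧ ∀ p ∈ V, (p ∈ τ.posVars ↔ p ∉ τ.negVars)

/-- Membership in `𝒱 = {0, 1/n, …, (n−1)/n, 1}`. -/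
def memVSet (n : ℕ) (c : ℚ) : Prop := ∃ k : ℕ, k ≤ n ∧ c = (k : ℚ) / (n : ℚ)

/-- The data `(τ_i, c_i)` of a `⟨V,𝒱⟩`-complete PIT (with `𝒱` given by `n`). -/
def IsCompletePIT (V : Finset ℕ) (n : ℕ) (L : List (CPL × ℚ)) : Prop :=
  (L.map Prod.fst).Nodup ∧
  (∀ t ∈ L, IsCompleteTermOver V t.1 ∧ memVSet n t.2) ∧
  (L.map Prod.snd).sum = 1

/-- A measure is coherent with a value assignment `pr` on the events `E`. -/
def coherent {V : Finset ℕ} (M : ProbModel V) (E : Finset CPL) (pr : CPL → ℚ) : Prop :=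
  ∀ ψ ∈ E, M.μ (truthSet V ψ) = (pr ψ : ℝ)

/-- Conditional probability `Pr_μ(φ | χ) = μ(‖φ∧χ‖)/μ(‖χ‖)`. -/
noncomputable def condProb {V : Finset ℕ} (M : ProbModel V) (φ χ : CPL) : ℝ :=
  M.μ (truthSet V (CPL.and φ χ)) / M.μ (truthSet V χ)

/-- `τ` is a solution to the PrAP `⟨{φ}, χ, H, E, pr⟩`: an `L_CPL`-term composed of
literals from `H` s.t. `φ, τ ⊨_CPL χ` and some probabilistic model coherent with `pr`
gives `μ(‖φ∧τ‖) > 0`. -/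
def IsPrAPSolution (φ χ : CPL) (H E : Finset CPL) (pr : CPL → ℚ) (τ : CPL) : Prop :=
  CPL.IsTerm τ ∧ τ.lits ⊆ H ∧
  (∀ v, CPL.eval v φ = true → CPL.eval v τ = true → CPL.eval v χ = true) ∧
  ∃ M : ProbModel (φ.vars ∪ χ.vars),
    coherent M E pr ∧ 0 < M.μ (truthSet (φ.vars ∪ χ.vars) (CPL.and φ τ))

/-- `τ` is a preferred solution: a solution s.t. for every other solution `σ` there is
a probabilistic model coherent with `pr` with `μ(‖τ‖) ≥ μ(‖σ‖)`. -/
def IsPreferredPrAPSolution (φ χ : CPL) (H E : Finset CPL) (pr : CPL → ℚ) (τ : CPL) : Prop :=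
  IsPrAPSolution φ χ H E pr τ ∧
  ∀ σ, IsPrAPSolution φ χ H E pr σ → σ ≠ τ →
    ∃ M : ProbModel (φ.vars ∪ χ.vars),
      coherent M E pr ∧
      M.μ (truthSet (φ.vars ∪ χ.vars) σ) ≤ M.μ (truthSet (φ.vars ∪ χ.vars) τ)

/-- The FP-counterpart `Ξ_p = {Pr(ψ)≈c̄ : ψ ∈ E, p(ψ) = c}` of a value assignment,
where `Pr(ψ)≈c̄` abbreviates `(Pr(ψ)≥c̄) ⊙ (Pr(ψ)≤c̄)`. -/
def XiP (E : Finset CPL) (pr : CPL → ℚ) : Finset FP :=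
  E.image (fun ψ => FP.conj (FP.probIneq ψ .ge (pr ψ)) (FP.probIneq ψ .le (pr ψ)))

/-- The next weakest PIL `λ^♭_𝒱` of the PIL `Pr(τ)◇(k/n)`. -/
def flatPIL (n : ℕ) (τ : CPL) (d : Ineq) (k : ℕ) : FP :=
  match d with
  | .ge => FP.probIneq τ .gt (((k : ℚ) - 1) / (n : ℚ))
  | .gt => FP.probIneq τ .ge ((k : ℚ) / (n : ℚ))
  | .le => FP.probIneq τ .lt (((k : ℚ) + 1) / (n : ℚ))
  | .lt => FP.probIneq τ .le ((k : ℚ) / (n : ℚ))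

/-- The theory `Ψ_Γ = Γ^↑ ∪ {p_φ → p_χ : φ, χ ∈ E[Γ], φ ⊨_CPL χ}`. -/
def PsiGamma (Γ : Finset FP) (e : CPL → ℕ) : Set Luk :=
  (fun α => FP.outer e α) '' (↑Γ : Set FP) ∪
  {ψ | ∃ φ ∈ Γ.sup FP.events, ∃ χ ∈ Γ.sup FP.events,
        CPL.Entails φ χ ∧ ψ = Luk.impl (.var (e φ)) (.var (e χ))}

/-- The conjunction `hd ∧ ⋀_{q ∈ s} q`. -/
def conjVarsFrom (hd : CPL) (s : Finset ℕ) : CPL :=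
  (s.sort (· ≤ ·)).foldl (fun acc q => CPL.and acc (CPL.var q)) hd
section Aux

lemma eval_congr_aux (φ : CPL) : ∀ v w : ℕ → Bool, (∀ p ∈ φ.vars, v p = w p) →
    CPL.eval v φ = CPL.eval w φ := by
  induction φ with
  | var p => intro v w h; exact h p (by simp [CPL.vars])
  | neg φ ih => intro v w h; simp [CPL.eval, ih v w (fun p hp => h p (by simpa [CPL.vars] using hp))]
  | and φ χ ih1 ih2 =>
      intro v w h
      simp [CPL.eval, ih1 v w (fun p hp => h p (by simp [CPL.vars, hp])),
        ih2 v w (fun p hp => h p (by simp [CPL.vars, hp]))]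
  | or φ χ ih1 ih2 =>
      intro v w h
      simp [CPL.eval, ih1 v w (fun p hp => h p (by simp [CPL.vars, hp])),
        ih2 v w (fun p hp => h p (by simp [CPL.vars, hp]))]

lemma eval_allFalse (φ : CPL) (h : CPL.IsConjVars φ ∨ CPL.IsDisjVars φ) :
    CPL.eval (fun _ => false) φ = false := by
  rcases h with h | h
  · induction h with
    | var p => simp [CPL.eval]
    | conj h1 h2 ih1 ih2 => simp [CPL.eval, ih1, ih2]
  · induction h with
    | var p => simp [CPL.eval]
    | disj h1 h2 ih1 ih2 => simp [CPL.eval, ih1, ih2]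

/-- A probability model concentrated on four worlds with weights `a,b,e,f`. -/
noncomputable def fourModel {V : Finset ℕ} (w1 w2 w3 w4 : World V) (a b e f : ℝ)
    (ha : 0 ≤ a) (hb : 0 ≤ b) (he : 0 ≤ e) (hf : 0 ≤ f) (hsum : a + b + e + f = 1) :
    ProbModel V where
  μ A := (if w1 ∈ A then a else 0) + (if w2 ∈ A then b else 0) +
    (if w3 ∈ A then e else 0) + (if w4 ∈ A then f else 0)
  nonneg A := by positivity
  le_one A := by
    have h1 : (if w1 ∈ A then a else 0) ≤ a := by split <;> simp [ha]
    have h2 : (if w2 ∈ A then b else 0) ≤ b := by split <;> simp [hb]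
    have h3 : (if w3 ∈ A then e else 0) ≤ e := by split <;> simp [he]
    have h4 : (if w4 ∈ A then f else 0) ≤ f := by split <;> simp [hf]
    linarith
  m_univ := by simp [hsum]
  m_empty := by simp
  m_add A B hAB := by
    have key : ∀ (w : World V) (x : ℝ),
        @ite ℝ (w ∈ A ∪ B) (Classical.propDecidable _) x 0 =
        (if w ∈ A then x else 0) + (if w ∈ B then x else 0) := by
      intro w x
      by_cases hA : w ∈ A <;> by_cases hB : w ∈ B <;>
        simp [hA, hB, Set.mem_union]
      exact absurd (Set.not_disjoint_iff.mpr ⟨w, hA, hB⟩) (by simpa using hAB)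
    rw [key w1 a, key w2 b, key w3 e, key w4 f]; ring

end Aux

/-- For `π, ρ` conjunctions/disjunctions of variables with `π ⊭_CPL ρ`,
`ρ ⊭_CPL π`, `π ∧ ρ` CPL-satisfiable, and both PILs FP-satisfiable and not FP-valid:
`Pr(π)◇c̄ ⊭_FP Pr(ρ)◇'d̄`. -/
theorem stmt13 (π ρ : CPL)
    (hπ : CPL.IsConjVars π ∨ CPL.IsDisjVars π)
    (hρ : CPL.IsConjVars ρ ∨ CPL.IsDisjVars ρ)
    (hn1 : ¬ CPL.Entails π ρ) (hn2 : ¬ CPL.Entails ρ π)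
    (hsat : CPL.Satisfiable (CPL.and π ρ))
    (c d : ℚ) (hc0 : 0 ≤ c) (hc1 : c ≤ 1) (hd0 : 0 ≤ d) (hd1 : d ≤ 1)
    (s s' : Ineq)
    (h1 : FP.Satisfiable (FP.probIneq π s c)) (h2 : ¬ FP.Valid (FP.probIneq π s c))
    (h3 : FP.Satisfiable (FP.probIneq ρ s' d)) (h4 : ¬ FP.Valid (FP.probIneq ρ s' d)) :
    ¬ FP.Entails1 (FP.probIneq π s c) (FP.probIneq ρ s' d) := by
  intro hEnt
  -- extract a permitted value x for π
  obtain ⟨M1, hM1⟩ := h1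
  set x : ℝ := M1.μ (truthSet _ π) with hxdef
  have hx0 : 0 ≤ x := M1.nonneg _
  have hx1 : x ≤ 1 := M1.le_one _
  have hxc : s.holds x (c : ℝ) := by
    by_contra h
    simp only [FP.interp, ← hxdef, if_neg h] at hM1
    norm_num at hM1
  -- extract a forbidden value y for ρ
  unfold FP.Valid at h4
  push_neg at h4
  obtain ⟨M2, hM2⟩ := h4
  set y : ℝ := M2.μ (truthSet _ ρ) with hydef
  have hy0 : 0 ≤ y := M2.nonneg _
  have hy1 : y ≤ 1 := M2.le_one _
  have hyd : ¬ s'.holds y (d : ℝ) := by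
    intro h
    apply hM2
    simp only [FP.interp, ← hydef, if_pos h]
  -- the four valuations
  obtain ⟨v1, hv1⟩ := hsat
  simp only [CPL.eval, Bool.and_eq_true] at hv1
  unfold CPL.Entails at hn1 hn2
  push_neg at hn1 hn2
  obtain ⟨v2, hv2π, hv2ρ⟩ := hn1
  obtain ⟨v3, hv3ρ, hv3π⟩ := hn2
  replace hv2ρ : CPL.eval v2 ρ = false := Bool.eq_false_iff.mpr hv2ρ
  replace hv3π : CPL.eval v3 π = false := Bool.eq_false_iff.mpr hv3π
  -- the universe of variables and the four worlds
  set V : Finset ℕ := (FP.probIneq π s c).vars ∪ (FP.probIneq ρ s' d).vars with hVdef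
  have hπsub : π.vars ⊆ V := Finset.subset_union_left
  have hρsub : ρ.vars ⊆ V := Finset.subset_union_right
  have agree : ∀ (v : ℕ → Bool) (φ : CPL), φ.vars ⊆ V →
      CPL.evalSet (V.filter (fun p => v p = true)) φ = CPL.eval v φ := by
    intro v φ hsub
    unfold CPL.evalSet
    apply eval_congr_aux
    intro p hp
    simp [Finset.mem_filter, hsub hp]
  have empty_eval : ∀ φ : CPL, CPL.evalSet (∅ : Finset ℕ) φ = CPL.eval (fun _ => false) φ := by
    intro φ
    unfold CPL.evalSet
    apply eval_congr_aux
    intro p _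
    simp
  let w1 : World V := ⟨V.filter (fun p => v1 p = true), Finset.filter_subset _ _⟩
  let w2 : World V := ⟨V.filter (fun p => v2 p = true), Finset.filter_subset _ _⟩
  let w3 : World V := ⟨V.filter (fun p => v3 p = true), Finset.filter_subset _ _⟩
  let w4 : World V := ⟨(∅ : Finset ℕ), by simp⟩
  -- membership of the worlds in the two truth sets
  have hw1π : w1 ∈ truthSet V π := by
    show CPL.evalSet _ π = true; rw [agree v1 π hπsub]; exact hv1.1
  have hw1ρ : w1 ∈ truthSet V ρ := by
    show CPL.evalSet _ ρ = true; rw [agree v1 ρ hρsub]; exact hv1.2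
  have hw2π : w2 ∈ truthSet V π := by
    show CPL.evalSet _ π = true; rw [agree v2 π hπsub]; exact hv2π
  have hw2ρ : w2 ∉ truthSet V ρ := by
    show ¬ CPL.evalSet _ ρ = true; rw [agree v2 ρ hρsub, hv2ρ]; simp
  have hw3π : w3 ∉ truthSet V π := by
    show ¬ CPL.evalSet _ π = true; rw [agree v3 π hπsub, hv3π]; simp
  have hw3ρ : w3 ∈ truthSet V ρ := by
    show CPL.evalSet _ ρ = true; rw [agree v3 ρ hρsub]; exact hv3ρ
  have hw4π : w4 ∉ truthSet V π := by
    show ¬ CPL.evalSet _ π = true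
    rw [empty_eval π, eval_allFalse π hπ]; simp
  have hw4ρ : w4 ∉ truthSet V ρ := by
    show ¬ CPL.evalSet _ ρ = true
    rw [empty_eval ρ, eval_allFalse ρ hρ]; simp
  -- the weights
  set a : ℝ := max 0 (x + y - 1) with hadef
  have ha : 0 ≤ a := le_max_left _ _
  have hax : a ≤ x := max_le hx0 (by linarith)
  have hay : a ≤ y := max_le hy0 (by linarith)
  have haxy : x + y - 1 ≤ a := le_max_right _ _
  have hb : 0 ≤ x - a := by linarith
  have he : 0 ≤ y - a := by linarith
  have hf : 0 ≤ 1 - x - y + a := by linarith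
  have hsum : a + (x - a) + (y - a) + (1 - x - y + a) = 1 := by ring
  set M : ProbModel V := fourModel w1 w2 w3 w4 a (x - a) (y - a) (1 - x - y + a)
    ha hb he hf hsum with hMdef
  have hμπ : M.μ (truthSet V π) = x := by
    show (if w1 ∈ _ then a else 0) + _ + _ + _ = x
    rw [if_pos hw1π, if_pos hw2π, if_neg hw3π, if_neg hw4π]
    ring
  have hμρ : M.μ (truthSet V ρ) = y := by
    show (if w1 ∈ _ then a else 0) + _ + _ + _ = y
    rw [if_pos hw1ρ, if_neg hw2ρ, if_pos hw3ρ, if_neg hw4ρ]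
    ring
  have hkey := hEnt M (by show (if s.holds (M.μ (truthSet V π)) (c : ℝ) then (1 : ℝ) else 0) = 1; rw [hμπ, if_pos hxc])
  change (if s'.holds (M.μ (truthSet V ρ)) (d : ℝ) then (1 : ℝ) else 0) = 1 at hkey
  simp only [FP.interp, hμρ, if_neg hyd] at hkey
  norm_num at hkey
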